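/- Let A be a canonical quasi-Babelian 3×3 advantage matrix with parameters a, b > 0 (a₂₁ = a₃₁ = b and all other off-diagonal entries equal to a), let ρ = b/a, and let F : S₃ → S₃ be the associated Variational Learning dynamics. If ρ > 2, then the vertex fixed point v₁ = (1,0,0) is asymptotically stable: there exists a relative neighbourhood U of v₁ in S₃ such that for every q ∈ U the iterates Fⁿ(q) converge to v₁. If 0 < ρ < 2, then v₁ is not asymptotically stable: for every relative neighbourhood U of v₁ in S₃ there exists q ∈ U whose iterates under F do not converge to v₁. -/

import Mathlib

open Finset Filter Topology

/-- The simplex `S₃` of probability vectors over three grammars. -/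
def simplex3 : Set (Fin 3 → ℝ) :=
  {p | (∀ i, 0 ≤ p i) ∧ ∑ i, p i = 1}

/-- The penalty probability `c_i(p) = ∑_{j ≠ i} a_{ij} p_j`. -/
def penalty (A : Matrix (Fin 3) (Fin 3) ℝ) (p : Fin 3 → ℝ) (i : Fin 3) : ℝ :=
  ∑ j ∈ Finset.univ.filter (fun j => j ≠ i), A i j * p j

/-- The Variational Learning dynamics
`F_i(p) = ∏_{j ≠ i} c_j(p) / ∑_m ∏_{k ≠ m} c_k(p)`. -/
noncomputable def VLdyn (A : Matrix (Fin 3) (Fin 3) ℝ) (p : Fin 3 → ℝ) (i : Fin 3) : ℝ :=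
  (∏ j ∈ Finset.univ.filter (fun j => j ≠ i), penalty A p j) /
    (∑ m, ∏ k ∈ Finset.univ.filter (fun k => k ≠ m), penalty A p k)

/-- The vertex `v_i` of the simplex, i.e. the state of total dominance of grammar `G_i`. -/
def vertex (i : Fin 3) : Fin 3 → ℝ := fun j => if j = i then 1 else 0

def Mab (a b : ℝ) : Matrix (Fin 3) (Fin 3) ℝ := !![0, a, a; b, 0, a; b, a, 0]

def Dm (a b : ℝ) (p : Fin 3 → ℝ) : ℝ :=
  (b*p 0 + a*p 2)*(b*p 0 + a*p 1) + a*(p 1 + p 2)*(b*p 0 + a*p 1)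
    + a*(p 1 + p 2)*(b*p 0 + a*p 2)

lemma pen0 (a b : ℝ) (p : Fin 3 → ℝ) : penalty (Mab a b) p 0 = a * (p 1 + p 2) := by
  simp [penalty, Mab, Finset.sum_filter, Fin.sum_univ_three]; ring

lemma pen1 (a b : ℝ) (p : Fin 3 → ℝ) : penalty (Mab a b) p 1 = b * p 0 + a * p 2 := by
  simp [penalty, Mab, Finset.sum_filter, Fin.sum_univ_three]

lemma pen2 (a b : ℝ) (p : Fin 3 → ℝ) : penalty (Mab a b) p 2 = b * p 0 + a * p 1 := by
  simp [penalty, Mab, Finset.sum_filter, Fin.sum_univ_three]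

lemma vl0 (a b : ℝ) (p : Fin 3 → ℝ) :
    VLdyn (Mab a b) p 0 = (b*p 0 + a*p 2)*(b*p 0 + a*p 1) / Dm a b p := by
  simp only [VLdyn, Finset.prod_filter, Fin.prod_univ_three, Fin.sum_univ_three,
    pen0, pen1, pen2, Dm]
  norm_num [Fin.ext_iff]

lemma vl1 (a b : ℝ) (p : Fin 3 → ℝ) :
    VLdyn (Mab a b) p 1 = a*(p 1 + p 2)*(b*p 0 + a*p 1) / Dm a b p := by
  simp only [VLdyn, Finset.prod_filter, Fin.prod_univ_three, Fin.sum_univ_three,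
    pen0, pen1, pen2, Dm]
  norm_num [Fin.ext_iff]

lemma vl2 (a b : ℝ) (p : Fin 3 → ℝ) :
    VLdyn (Mab a b) p 2 = a*(p 1 + p 2)*(b*p 0 + a*p 2) / Dm a b p := by
  simp only [VLdyn, Finset.prod_filter, Fin.prod_univ_three, Fin.sum_univ_three,
    pen0, pen1, pen2, Dm]
  norm_num [Fin.ext_iff]

lemma simplex3_sum (p : Fin 3 → ℝ) (hp : p ∈ simplex3) : p 0 + p 1 + p 2 = 1 := by
  have := hp.2; rwa [Fin.sum_univ_three] at this

lemma Dm_pos (a b : ℝ) (ha : 0 < a) (hb : 0 < b) (p : Fin 3 → ℝ) (hp : p ∈ simplex3) :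
    0 < Dm a b p := by
  have h0 := hp.1 0; have h1 := hp.1 1; have h2 := hp.1 2
  have hs := simplex3_sum p hp
  unfold Dm
  rcases lt_or_ge 0 (p 0) with hpos | hle
  · nlinarith [mul_pos (mul_pos hb hpos) (mul_pos hb hpos), mul_nonneg ha.le h1,
      mul_nonneg ha.le h2, mul_nonneg hb.le h0, mul_nonneg (add_nonneg h1 h2) ha.le,
      mul_nonneg (mul_nonneg ha.le (add_nonneg h1 h2)) (add_nonneg (mul_nonneg hb.le h0) (mul_nonneg ha.le h1)),
      mul_nonneg (mul_nonneg ha.le (add_nonneg h1 h2)) (add_nonneg (mul_nonneg hb.le h0) (mul_nonneg ha.le h2))]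
  · have hp0 : p 0 = 0 := le_antisymm hle h0
    have hsum : p 1 + p 2 = 1 := by linarith
    rw [hp0, hsum]
    nlinarith [mul_pos ha ha, mul_nonneg (mul_nonneg ha.le ha.le) (mul_nonneg h1 h2)]

lemma F_mem (a b : ℝ) (ha : 0 < a) (hb : 0 < b) (p : Fin 3 → ℝ) (hp : p ∈ simplex3) :
    VLdyn (Mab a b) p ∈ simplex3 := by
  have h0 := hp.1 0; have h1 := hp.1 1; have h2 := hp.1 2
  have hD := Dm_pos a b ha hb p hp
  have c1n : 0 ≤ b*p 0 + a*p 2 := add_nonneg (mul_nonneg hb.le h0) (mul_nonneg ha.le h2)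
  have c2n : 0 ≤ b*p 0 + a*p 1 := add_nonneg (mul_nonneg hb.le h0) (mul_nonneg ha.le h1)
  have c0n : 0 ≤ a*(p 1 + p 2) := mul_nonneg ha.le (add_nonneg h1 h2)
  constructor
  · intro i
    match i with
    | 0 => rw [vl0]; exact div_nonneg (mul_nonneg c1n c2n) hD.le
    | 1 => rw [vl1]; exact div_nonneg (mul_nonneg c0n c2n) hD.le
    | 2 => rw [vl2]; exact div_nonneg (mul_nonneg c0n c1n) hD.le
  · rw [Fin.sum_univ_three, vl0, vl1, vl2, ← add_div, ← add_div,
      div_eq_one_iff_eq hD.ne']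
    unfold Dm; ring

lemma sF_eq (a b : ℝ) (p : Fin 3 → ℝ) :
    VLdyn (Mab a b) p 1 + VLdyn (Mab a b) p 2 =
      a*(p 1 + p 2)*(2*b*p 0 + a*(p 1 + p 2)) / Dm a b p := by
  rw [vl1, vl2, ← add_div]; ring_nf

set_option maxHeartbeats 1000000 in
lemma contract (a b : ℝ) (ha : 0 < a) (hb : 0 < b) (hab : 2*a < b) (p : Fin 3 → ℝ)
    (hp : p ∈ simplex3) (hs : p 1 + p 2 ≤ (b-2*a)/(8*b)) :
    VLdyn (Mab a b) p 1 + VLdyn (Mab a b) p 2 ≤ (2*a+b)/(2*b) * (p 1 + p 2) := by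
  have h0 := hp.1 0; have h1 := hp.1 1; have h2 := hp.1 2
  have hsum := simplex3_sum p hp
  have hs0 : 0 ≤ p 1 + p 2 := add_nonneg h1 h2
  have hD := Dm_pos a b ha hb p hp
  obtain ⟨d, hdef⟩ : ∃ d : ℝ, d = (b-2*a)/(8*b) := ⟨_, rfl⟩
  rw [← hdef] at hs
  have hba : 0 < b - 2*a := by linarith
  have hd0 : 0 < d := by rw [hdef]; positivity
  have hd1 : d ≤ 1 := by rw [hdef, div_le_one (by positivity)]; linarith
  have hp0l : 1 - d ≤ p 0 := by linarith
  have hp0u : p 0 ≤ 1 := by linarith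
  -- core pure inequality
  have core : a*(2*b + a*d)*(2*b) ≤ (2*a+b)*(b*(1-d))^2 := by
    have key : 256*a*b^2 + 16*a^2*(b-2*a) ≤ (2*a+b)*(8*b-(b-2*a))^2 := by
      nlinarith [mul_pos hba hba, mul_pos (mul_pos hba hba) hba, mul_pos ha hba,
        mul_pos hb hba, mul_pos (mul_pos ha hba) hba, mul_pos (mul_pos hb hba) hba,
        mul_pos ha hb, mul_pos (mul_pos ha hb) hba]
    have e1 : a*(2*b + a*d)*(2*b) = (256*a*b^2 + 16*a^2*(b-2*a))/64 := by
      rw [hdef]; field_simp; ring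
    have e2 : (2*a+b)*(b*(1-d))^2 = ((2*a+b)*(8*b-(b-2*a))^2)/64 := by
      rw [hdef]; field_simp; ring
    rw [e1, e2]; linarith
  have hbd : 0 ≤ b*(1-d) := mul_nonneg hb.le (by linarith)
  have e1 : b*(1-d) ≤ b*p 0 := by nlinarith
  have hD3 : (b*(1-d))^2 ≤ Dm a b p := by
    unfold Dm
    nlinarith [mul_nonneg (mul_nonneg hb.le h0) (mul_nonneg ha.le h1),
      mul_nonneg (mul_nonneg hb.le h0) (mul_nonneg ha.le h2),
      mul_nonneg (mul_nonneg ha.le h1) (mul_nonneg ha.le h2),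
      mul_nonneg (mul_nonneg ha.le hs0) (add_nonneg (mul_nonneg hb.le h0) (mul_nonneg ha.le h1)),
      mul_nonneg (mul_nonneg ha.le hs0) (add_nonneg (mul_nonneg hb.le h0) (mul_nonneg ha.le h2)),
      mul_le_mul e1 e1 hbd (le_trans hbd e1)]
  have step1 : 2*b*p 0 + a*(p 1 + p 2) ≤ 2*b + a*d := by
    have := mul_le_mul_of_nonneg_left hs ha.le
    nlinarith
  have key : a*(p 1 + p 2)*(2*b*p 0 + a*(p 1 + p 2))*(2*b)
      ≤ (2*a+b)*((p 1 + p 2)*Dm a b p) := by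
    nlinarith [mul_le_mul_of_nonneg_left step1
        (mul_nonneg (mul_nonneg ha.le hs0) (by linarith : (0:ℝ) ≤ 2*b)),
      mul_le_mul_of_nonneg_left core hs0,
      mul_le_mul_of_nonneg_left hD3 (mul_nonneg (by linarith : (0:ℝ) ≤ 2*a+b) hs0)]
  rw [sF_eq, div_le_iff₀ hD, div_mul_eq_mul_div, div_mul_eq_mul_div,
    le_div_iff₀ (by linarith : (0:ℝ) < 2*b)]
  nlinarith [key]

set_option maxHeartbeats 1000000 in
lemma expand (a b : ℝ) (ha : 0 < a) (hb : 0 < b) (hab : b < 2*a) (p : Fin 3 → ℝ)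
    (hp : p ∈ simplex3) (hs : p 1 + p 2 ≤ (2*a-b)*b/(32*a^2)) :
    (2*a+b)/(2*b) * (p 1 + p 2) ≤ VLdyn (Mab a b) p 1 + VLdyn (Mab a b) p 2 := by
  have h0 := hp.1 0; have h1 := hp.1 1; have h2 := hp.1 2
  have hsum := simplex3_sum p hp
  have hs0 : 0 ≤ p 1 + p 2 := add_nonneg h1 h2
  have hD := Dm_pos a b ha hb p hp
  obtain ⟨d, hdef⟩ : ∃ d : ℝ, d = (2*a-b)*b/(32*a^2) := ⟨_, rfl⟩
  rw [← hdef] at hs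
  have hba : 0 < 2*a - b := by linarith
  have hd0 : 0 < d := by rw [hdef]; positivity
  have hd1 : d ≤ 1 := by
    rw [hdef, div_le_one (by positivity)]; nlinarith [sq_nonneg (a-b), sq_nonneg a]
  have hp0l : 1 - d ≤ p 0 := by linarith
  have hp0u : p 0 ≤ 1 := by linarith
  have core : (2*a+b)*((b + a*d)^2 + a*d*(2*b + a*d)) ≤ 2*b*(a*(2*b*(1-d))) := by
    have key : (2*a+b)*((32*a^2*b + a*((2*a-b)*b))^2
        + a*((2*a-b)*b)*(64*a^2*b + a*((2*a-b)*b)))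
        ≤ 4*a*b^2*(32*a^2-(2*a-b)*b)*(32*a^2) := by
      have hq : 0 < 760*a^2 - 256*a*b + 2*b^2 := by
        nlinarith [mul_pos ha ha, sq_nonneg b, mul_pos ha hb]
      nlinarith [mul_pos (mul_pos (mul_pos (mul_pos (mul_pos ha ha) hb) hb) hba) hq]
    have e1 : (2*a+b)*((b + a*d)^2 + a*d*(2*b + a*d))
        = ((2*a+b)*((32*a^2*b + a*((2*a-b)*b))^2
          + a*((2*a-b)*b)*(64*a^2*b + a*((2*a-b)*b))))/(32*a^2)^2 := by
      rw [hdef]; field_simp; ring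
    have e2 : 2*b*(a*(2*b*(1-d))) = (4*a*b^2*(32*a^2-(2*a-b)*b)*(32*a^2))/(32*a^2)^2 := by
      rw [hdef]; field_simp; ring
    rw [e1, e2]
    gcongr
  have hbad : 0 ≤ b + a*d := by positivity
  have hc1u : b*p 0 + a*p 2 ≤ b + a*d := by
    have : a*p 2 ≤ a*d := mul_le_mul_of_nonneg_left (by linarith) ha.le
    nlinarith
  have hc2u : b*p 0 + a*p 1 ≤ b + a*d := by
    have : a*p 1 ≤ a*d := mul_le_mul_of_nonneg_left (by linarith) ha.le
    nlinarith
  have hc1n : 0 ≤ b*p 0 + a*p 2 := add_nonneg (mul_nonneg hb.le h0) (mul_nonneg ha.le h2)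
  have hc2n : 0 ≤ b*p 0 + a*p 1 := add_nonneg (mul_nonneg hb.le h0) (mul_nonneg ha.le h1)
  have hDu : Dm a b p ≤ (b + a*d)^2 + a*d*(2*b + a*d) := by
    unfold Dm
    nlinarith [mul_le_mul hc1u hc2u hc2n hbad,
      mul_le_mul (mul_le_mul_of_nonneg_left hs ha.le)
        (by nlinarith [mul_le_mul_of_nonneg_left hs ha.le,
            mul_le_mul_of_nonneg_left hp0u (by linarith : (0:ℝ) ≤ 2*b)] :
          (b*p 0 + a*p 1) + (b*p 0 + a*p 2) ≤ 2*b + a*d)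
        (by nlinarith : 0 ≤ (b*p 0 + a*p 1) + (b*p 0 + a*p 2))
        (mul_nonneg ha.le hd0.le)]
  have hnum : a*(p 1 + p 2)*(2*b*(1-d)) ≤ a*(p 1 + p 2)*(2*b*p 0 + a*(p 1 + p 2)) := by
    have : 2*b*(1-d) ≤ 2*b*p 0 + a*(p 1 + p 2) := by nlinarith
    exact mul_le_mul_of_nonneg_left this (mul_nonneg ha.le hs0)
  have key : (2*a+b)*((p 1 + p 2)*Dm a b p)
      ≤ a*(p 1 + p 2)*(2*b*p 0 + a*(p 1 + p 2))*(2*b) := by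
    nlinarith [mul_le_mul_of_nonneg_left hDu
        (mul_nonneg (by linarith : (0:ℝ) ≤ 2*a+b) hs0),
      mul_le_mul_of_nonneg_left core hs0,
      mul_le_mul_of_nonneg_right hnum (by linarith : (0:ℝ) ≤ 2*b)]
  rw [sF_eq, le_div_iff₀ hD, div_mul_eq_mul_div, div_mul_eq_mul_div,
    div_le_iff₀ (by linarith : (0:ℝ) < 2*b)]
  nlinarith [key]

lemma sF_pos (a b : ℝ) (ha : 0 < a) (hb : 0 < b) (p : Fin 3 → ℝ) (hp : p ∈ simplex3)
    (hsp : 0 < p 1 + p 2) :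
    0 < VLdyn (Mab a b) p 1 + VLdyn (Mab a b) p 2 := by
  rw [sF_eq]
  apply div_pos _ (Dm_pos a b ha hb p hp)
  have h0 := hp.1 0
  have h : 0 < 2*b*p 0 + a*(p 1 + p 2) := by
    nlinarith [mul_nonneg hb.le h0, mul_pos ha hsp]
  exact mul_pos (mul_pos ha hsp) h

lemma vertex_simp : vertex 0 0 = 1 ∧ vertex 0 1 = 0 ∧ vertex 0 2 = 0 := by
  refine ⟨rfl, ?_, ?_⟩ <;> simp [vertex]


theorem stmt_18 (a b : ℝ) (ha : 0 < a) (hb : 0 < b)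
    (A : Matrix (Fin 3) (Fin 3) ℝ)
    (hA : A = !![0, a, a; b, 0, a; b, a, 0]) (ρ : ℝ) (hρ : ρ = b / a) :
    (2 < ρ → ∃ U ∈ 𝓝[simplex3] (vertex 0), ∀ q ∈ U,
      Tendsto (fun n => (VLdyn A)^[n] q) atTop (𝓝 (vertex 0))) ∧
    (ρ < 2 → ∀ U ∈ 𝓝[simplex3] (vertex 0), ∃ q ∈ U,
      ¬ Tendsto (fun n => (VLdyn A)^[n] q) atTop (𝓝 (vertex 0))) := by
  have hA' : A = Mab a b := hA
  subst hA'
  subst hρ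
  constructor
  · -- stability
    intro hρ2
    have hab : 2*a < b := by
      rw [lt_div_iff₀ ha] at hρ2; linarith
    obtain ⟨δ, hδdef⟩ : ∃ δ : ℝ, δ = (b-2*a)/(8*b) := ⟨_, rfl⟩
    have hδ0 : 0 < δ := by rw [hδdef]; apply div_pos <;> linarith
    obtain ⟨lam, hldef⟩ : ∃ l : ℝ, l = (2*a+b)/(2*b) := ⟨_, rfl⟩
    have hl0 : 0 ≤ lam := by rw [hldef]; positivity
    have hl1 : lam < 1 := by rw [hldef, div_lt_one (by linarith)]; linarith
    have hVopen : IsOpen {q : Fin 3 → ℝ | q 1 + q 2 < δ} :=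
      isOpen_lt ((continuous_apply 1).add (continuous_apply 2)) continuous_const
    have hvV : vertex 0 ∈ {q : Fin 3 → ℝ | q 1 + q 2 < δ} := by
      simp only [Set.mem_setOf_eq, vertex_simp.2.1, vertex_simp.2.2]; linarith
    refine ⟨{q : Fin 3 → ℝ | q 1 + q 2 < δ} ∩ simplex3,
      Filter.inter_mem (mem_nhdsWithin_of_mem_nhds (hVopen.mem_nhds hvV))
        self_mem_nhdsWithin, ?_⟩
    rintro q ⟨hqV, hqS⟩
    have hq0 : 0 ≤ q 1 + q 2 := add_nonneg (hqS.1 1) (hqS.1 2)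
    have hqlt : q 1 + q 2 < δ := hqV
    have main : ∀ n, (VLdyn (Mab a b))^[n] q ∈ simplex3 ∧
        ((VLdyn (Mab a b))^[n] q) 1 + ((VLdyn (Mab a b))^[n] q) 2 ≤ lam^n * (q 1 + q 2) := by
      intro n
      induction n with
      | zero => simpa using hqS
      | succ n ih =>
        obtain ⟨hmem, hle⟩ := ih
        have hsn : ((VLdyn (Mab a b))^[n] q) 1 + ((VLdyn (Mab a b))^[n] q) 2 ≤ (b-2*a)/(8*b) := by
          have : lam^n ≤ 1 := pow_le_one₀ hl0 hl1.le
          rw [← hδdef]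
          nlinarith [mul_le_mul_of_nonneg_right this hq0]
        refine ⟨?_, ?_⟩
        · rw [Function.iterate_succ_apply']
          exact F_mem a b ha hb _ hmem
        · rw [Function.iterate_succ_apply']
          calc (VLdyn (Mab a b) ((VLdyn (Mab a b))^[n] q)) 1 +
                (VLdyn (Mab a b) ((VLdyn (Mab a b))^[n] q)) 2
              ≤ (2*a+b)/(2*b) * (((VLdyn (Mab a b))^[n] q) 1 + ((VLdyn (Mab a b))^[n] q) 2) :=
                contract a b ha hb hab _ hmem hsn
            _ = lam * (((VLdyn (Mab a b))^[n] q) 1 + ((VLdyn (Mab a b))^[n] q) 2) := by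
                rw [hldef]
            _ ≤ lam * (lam^n * (q 1 + q 2)) := mul_le_mul_of_nonneg_left hle hl0
            _ = lam^(n+1) * (q 1 + q 2) := by ring
    have htends : Tendsto (fun n => lam^n * (q 1 + q 2)) atTop (𝓝 0) := by
      simpa using (tendsto_pow_atTop_nhds_zero_of_lt_one hl0 hl1).mul_const (q 1 + q 2)
    have h1t : Tendsto (fun n => ((VLdyn (Mab a b))^[n] q) 1) atTop (𝓝 0) := by
      apply squeeze_zero (fun n => (main n).1.1 1) (fun n => ?_) htends
      have := (main n).2
      have := (main n).1.1 2
      linarith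
    have h2t : Tendsto (fun n => ((VLdyn (Mab a b))^[n] q) 2) atTop (𝓝 0) := by
      apply squeeze_zero (fun n => (main n).1.1 2) (fun n => ?_) htends
      have := (main n).2
      have := (main n).1.1 1
      linarith
    have h0t : Tendsto (fun n => ((VLdyn (Mab a b))^[n] q) 0) atTop (𝓝 1) := by
      have heq : ∀ n, ((VLdyn (Mab a b))^[n] q) 0 =
          1 - ((VLdyn (Mab a b))^[n] q) 1 - ((VLdyn (Mab a b))^[n] q) 2 := by
        intro n
        have := simplex3_sum _ (main n).1
        linarith
      have : Tendsto (fun n => 1 - ((VLdyn (Mab a b))^[n] q) 1 - ((VLdyn (Mab a b))^[n] q) 2)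
          atTop (𝓝 (1 - 0 - 0)) := (tendsto_const_nhds.sub h1t).sub h2t
      rw [show (1:ℝ) - 0 - 0 = 1 by ring] at this
      exact this.congr (fun n => (heq n).symm)
    rw [tendsto_pi_nhds]
    intro i
    match i with
    | 0 => rw [vertex_simp.1]; exact h0t
    | 1 => rw [vertex_simp.2.1]; exact h1t
    | 2 => rw [vertex_simp.2.2]; exact h2t
  · -- instability
    intro hρ2 U hU
    have hab : b < 2*a := by
      rw [div_lt_iff₀ ha] at hρ2; linarith
    obtain ⟨δ, hδdef⟩ : ∃ δ : ℝ, δ = (2*a-b)*b/(32*a^2) := ⟨_, rfl⟩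
    have hδ0 : 0 < δ := by rw [hδdef]; apply div_pos; nlinarith; positivity
    obtain ⟨mu, hmdef⟩ : ∃ m : ℝ, m = (2*a+b)/(2*b) := ⟨_, rfl⟩
    have hm1 : 1 < mu := by rw [hmdef, lt_div_iff₀ (by linarith : (0:ℝ) < 2*b)]; linarith
    obtain ⟨V, hVopen, hvV, hVU⟩ := mem_nhdsWithin.mp hU
    obtain ⟨r, hr0, hball⟩ := Metric.isOpen_iff.mp hVopen _ hvV
    obtain ⟨ε, hεdef⟩ : ∃ e : ℝ, e = min (r/2) (1/2) := ⟨_, rfl⟩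
    have hε0 : 0 < ε := by rw [hεdef]; exact lt_min (by linarith) (by norm_num)
    have hεr : ε < r := by
      rw [hεdef]; calc min (r/2) (1/2) ≤ r/2 := min_le_left _ _
        _ < r := by linarith
    have password_half : ε ≤ 1/2 := by rw [hεdef]; exact min_le_right _ _
    set q : Fin 3 → ℝ := fun j => if j = 0 then 1-ε else if j = 1 then ε else 0 with hqdef
    have hq0 : q 0 = 1-ε := rfl
    have hq1 : q 1 = ε := rfl
    have hq2 : q 2 = 0 := rfl
    have hqS : q ∈ simplex3 := by
      constructor
      · intro i
        match i with
        | 0 => rw [hq0]; linarith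
        | 1 => rw [hq1]; linarith
        | 2 => rw [hq2]
      · rw [Fin.sum_univ_three, hq0, hq1, hq2]; ring
    have hqV : q ∈ V := by
      apply hball
      rw [Metric.mem_ball, dist_pi_lt_iff hr0]
      intro i
      match i with
      | 0 => rw [Real.dist_eq, hq0, vertex_simp.1]; rw [abs_lt]; constructor <;> linarith
      | 1 => rw [Real.dist_eq, hq1, vertex_simp.2.1]; rw [abs_lt]; constructor <;> linarith
      | 2 => rw [Real.dist_eq, hq2, vertex_simp.2.2]; simpa using hr0
    refine ⟨q, hVU ⟨hqV, hqS⟩, ?_⟩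
    intro hT
    have hmem : ∀ n, (VLdyn (Mab a b))^[n] q ∈ simplex3 := by
      intro n
      induction n with
      | zero => simpa using hqS
      | succ n ih => rw [Function.iterate_succ_apply']; exact F_mem a b ha hb _ ih
    have hpos : ∀ n, 0 < ((VLdyn (Mab a b))^[n] q) 1 + ((VLdyn (Mab a b))^[n] q) 2 := by
      intro n
      induction n with
      | zero => simp only [Function.iterate_zero_apply]; rw [hq1, hq2]; linarith
      | succ n ih =>
        rw [Function.iterate_succ_apply']
        exact sF_pos a b ha hb _ (hmem n) ih
    have hst : Tendsto (fun n => ((VLdyn (Mab a b))^[n] q) 1 + ((VLdyn (Mab a b))^[n] q) 2)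
        atTop (𝓝 0) := by
      have h1 := tendsto_pi_nhds.mp hT 1
      have h2 := tendsto_pi_nhds.mp hT 2
      rw [vertex_simp.2.1] at h1
      rw [vertex_simp.2.2] at h2
      simpa using h1.add h2
    obtain ⟨N, hN⟩ := Filter.eventually_atTop.mp (hst.eventually (gt_mem_nhds hδ0))
    have growth : ∀ k, mu^k * (((VLdyn (Mab a b))^[N] q) 1 + ((VLdyn (Mab a b))^[N] q) 2)
        ≤ ((VLdyn (Mab a b))^[N+k] q) 1 + ((VLdyn (Mab a b))^[N+k] q) 2 := by
      intro k
      induction k with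
      | zero => simp
      | succ k ih =>
        have hsmall : ((VLdyn (Mab a b))^[N+k] q) 1 + ((VLdyn (Mab a b))^[N+k] q) 2
            ≤ (2*a-b)*b/(32*a^2) := by
          rw [← hδdef]
          exact (hN (N+k) (Nat.le_add_right N k)).le
        have hexp := expand a b ha hb hab _ (hmem (N+k)) hsmall
        rw [show N+(k+1) = (N+k)+1 by ring, Function.iterate_succ_apply']
        calc mu^(k+1) * (((VLdyn (Mab a b))^[N] q) 1 + ((VLdyn (Mab a b))^[N] q) 2)
            = mu * (mu^k * (((VLdyn (Mab a b))^[N] q) 1 + ((VLdyn (Mab a b))^[N] q) 2)) := by ring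
          _ ≤ mu * (((VLdyn (Mab a b))^[N+k] q) 1 + ((VLdyn (Mab a b))^[N+k] q) 2) :=
              mul_le_mul_of_nonneg_left ih (by linarith)
          _ = (2*a+b)/(2*b) * (((VLdyn (Mab a b))^[N+k] q) 1 + ((VLdyn (Mab a b))^[N+k] q) 2) := by
              rw [hmdef]
          _ ≤ _ := hexp
    obtain ⟨k, hk⟩ := pow_unbounded_of_one_lt
      (δ / (((VLdyn (Mab a b))^[N] q) 1 + ((VLdyn (Mab a b))^[N] q) 2)) hm1
    have hk' : δ < mu^k * (((VLdyn (Mab a b))^[N] q) 1 + ((VLdyn (Mab a b))^[N] q) 2) :=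
      (div_lt_iff₀ (hpos N)).mp hk
    have hc := hN (N+k) (Nat.le_add_right N k)
    linarith [growth k]
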